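/- Let A be an associative ring of prime characteristic p. Then for all a, b ∈ A, (a+b)^p = a^p + b^p + Σ_{i=1}^{p−1} s_i(a,b), where the elements s_i(a,b) are determined by i·s_i(a,b) being the coefficient of t^{i−1} in ad(ta+b)^{p−1}(a) in the polynomial ring A[t]; in particular each s_i(a,b) lies in the Lie subring generated by a and b. -/

import Mathlib

open Polynomial Finset

attribute [local instance] LieRing.ofAssociativeRing

section JacAux

lemma jac_ad_iter_eq {R : Type*} [Ring R] (x r : R) (n : ℕ) :
    (fun z => z * x - x * z)^[n] r
      = ∑ i ∈ Finset.range (n + 1),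
          ((-1 : ℤ) ^ (n - i) * (n.choose i : ℤ)) • (x ^ (n - i) * r * x ^ i) := by
  have hfun : (fun z : R => z * x - x * z)
      = ⇑((LinearMap.mulRight ℤ x + -(LinearMap.mulLeft ℤ x) : Module.End ℤ R)) := by
    funext z; simp [sub_eq_add_neg]
  rw [hfun, ← Module.End.pow_apply]
  have hc : Commute (LinearMap.mulRight ℤ x) (-(LinearMap.mulLeft ℤ x)) :=
    ((LinearMap.commute_mulLeft_right x x)).symm.neg_right
  rw [hc.add_pow]
  rw [LinearMap.sum_apply]
  apply Finset.sum_congr rfl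
  intro i hi
  have hL : (-(LinearMap.mulLeft ℤ x)) ^ (n - i)
      = ((-1 : ℤ) ^ (n - i)) • LinearMap.mulLeft ℤ (x ^ (n - i)) := by
    rw [← LinearMap.pow_mulLeft, ← _root_.smul_pow, neg_one_zsmul]
  rw [hL]
  simp only [Module.End.mul_apply, Module.End.natCast_apply, LinearMap.smul_apply,
    LinearMap.mulLeft_apply, LinearMap.pow_mulRight, LinearMap.mulRight_apply]
  rw [mul_smul, natCast_zsmul, smul_mul_assoc]
  congr 1
  rw [mul_smul_comm, smul_mul_assoc]

lemma jac_choose_zmod (p : ℕ) [hp : Fact p.Prime] :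
    ∀ i ≤ p - 1, (((p - 1).choose i : ZMod p)) = (-1) ^ i := by
  intro i
  induction i with
  | zero => simp
  | succ i ih =>
    intro h
    have hp2 : 2 ≤ p := hp.out.two_le
    have hi : i ≤ p - 1 := by omega
    have hdvd : (p : ℤ) ∣ (p.choose (i + 1) : ℤ) := by
      exact_mod_cast Int.natCast_dvd_natCast.mpr
        (hp.out.dvd_choose_self (Nat.succ_ne_zero i) (by omega))
    have hsucc : (p - 1).choose i + (p - 1).choose (i + 1) = p.choose (i + 1) := by
      have := Nat.choose_succ_succ (p - 1) i
      rw [show (p - 1).succ = p by omega] at this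
      simp only [Nat.succ_eq_add_one] at this
      omega
    have hz : ((p.choose (i + 1) : ℤ) : ZMod p) = 0 := by
      rcases hdvd with ⟨c, hc⟩
      simp [hc]
    have : ((p - 1).choose i : ZMod p) + ((p - 1).choose (i + 1) : ZMod p) = 0 := by
      have := congrArg (fun n : ℕ => (n : ZMod p)) hsucc
      push_cast at this hz ⊢
      rw [this]
      exact_mod_cast hz
    rw [ih hi] at this
    rw [pow_succ]
    linear_combination this

lemma jac_neg_one_pow_sub (p : ℕ) [hp : Fact p.Prime] : ((-1 : ZMod p)) ^ (p - 1) = 1 := by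
  rcases hp.out.eq_two_or_odd' with h | h
  · subst h
    rw [show 2 - 1 = 1 from rfl, pow_one, CharTwo.neg_eq]
  · exact (Nat.Odd.sub_odd h odd_one).neg_one_pow

lemma jac_scalar_one {A : Type*} [Ring A] (p : ℕ) [hp : Fact p.Prime] [CharP A p]
    {i : ℕ} (h : i ≤ p - 1) :
    (((-1 : ℤ) ^ (p - 1 - i) * ((p - 1).choose i : ℤ) : ℤ) : A) = 1 := by
  have key : (((-1 : ℤ) ^ (p - 1 - i) * ((p - 1).choose i : ℤ) : ℤ) : ZMod p)
      = ((1 : ℤ) : ZMod p) := by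
    push_cast
    rw [jac_choose_zmod p i h, ← pow_add, Nat.sub_add_cancel h, jac_neg_one_pow_sub p]
  rw [show (1 : A) = ((1 : ℤ) : A) by simp]
  exact (CharP.intCast_eq_intCast A p).mpr ((ZMod.intCast_eq_intCast_iff _ _ _).mp key)

variable {A : Type*} [Ring A]

lemma jac_natDeg_le (a b : A) : (C a * X + C b).natDegree ≤ 1 :=
  le_trans (natDegree_add_le _ _) (by
    simp only [natDegree_C, max_le_iff]
    exact ⟨le_trans (natDegree_C_mul_le a X) natDegree_X_le, Nat.zero_le 1⟩)

lemma jac_natDeg_pow_le (a b : A) (n : ℕ) : ((C a * X + C b) ^ n).natDegree ≤ n :=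
  le_trans (natDegree_pow_le) (by
    calc n * (C a * X + C b).natDegree ≤ n * 1 := Nat.mul_le_mul_left n (jac_natDeg_le a b)
    _ = n := mul_one n)

lemma jac_deriv_pow_eq (a b : A) (n : ℕ) :
    derivative ((C a * X + C b) ^ n)
      = ∑ j ∈ Finset.range n, (C a * X + C b) ^ j * C a * (C a * X + C b) ^ (n - 1 - j) := by
  induction n with
  | zero => simp
  | succ n ih =>
    rw [pow_succ, derivative_mul, ih, Finset.sum_range_succ, Finset.sum_mul]
    have hx : derivative (C a * X + C b) = C a := by simp
    rw [hx]
    congr 1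
    · apply Finset.sum_congr rfl
      intro j hj
      rw [mem_range] at hj
      rw [mul_assoc, ← pow_succ, show n - 1 - j + 1 = n + 1 - 1 - j by omega]
    · rw [show n + 1 - 1 - n = 0 by omega, pow_zero, mul_one]

lemma jac_coeff_bot (a b : A) (n : ℕ) : (((C a * X + C b)) ^ n).coeff 0 = b ^ n := by
  have : constantCoeff ((C a * X + C b) ^ n) = b ^ n := by
    rw [map_pow]
    simp
  simpa [constantCoeff_apply] using this

lemma jac_coeff_top (a b : A) (n : ℕ) : (((C a * X + C b)) ^ n).coeff n = a ^ n := by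
  induction n with
  | zero => simp
  | succ n ih =>
    rw [pow_succ, coeff_mul, Finset.Nat.sum_antidiagonal_eq_sum_range_succ_mk]
    rw [Finset.sum_eq_single_of_mem n (by simp [mem_range])]
    · rw [ih, show n + 1 - n = 1 by omega]
      simp [coeff_C, mul_assoc, ← pow_succ]
    · intro k hk hne
      rw [mem_range] at hk
      rcases Nat.lt_or_ge k (n + 1) with h | h
      · have h2 : 2 ≤ n + 1 - k := by omega
        have : (C a * X + C b).coeff (n + 1 - k) = 0 := by
          rcases Nat.exists_eq_add_of_le h2 with ⟨m, hm⟩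
          rw [hm]
          simp only [coeff_add, coeff_C_mul, coeff_X, coeff_C, hm]
          norm_num
          intro hh
          exact absurd hh (by omega)
        rw [this, mul_zero]
      · have hk1 : k = n + 1 := by omega
        subst hk1
        rw [coeff_eq_zero_of_natDegree_lt
          (lt_of_le_of_lt (jac_natDeg_pow_le a b n) (Nat.lt_succ_self n)), zero_mul]

lemma jac_mem_span_coeff (a b : A) (n k : ℕ) :
    ((fun z => z * (C a * X + C b) - (C a * X + C b) * z)^[n] (C a)).coeff k
      ∈ LieSubalgebra.lieSpan ℤ A {a, b} := by
  set S := LieSubalgebra.lieSpan ℤ A {a, b} with hS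
  have ha : a ∈ S := LieSubalgebra.subset_lieSpan (by simp)
  have hb : b ∈ S := LieSubalgebra.subset_lieSpan (by simp)
  induction n generalizing k with
  | zero =>
    simp only [Function.iterate_zero, id_eq, coeff_C]
    split
    · exact ha
    · exact S.zero_mem
  | succ n ih =>
    rw [Function.iterate_succ_apply']
    set z := (fun z => z * (C a * X + C b) - (C a * X + C b) * z)^[n] (C a) with hz
    have hrw : z * (C a * X + C b) - (C a * X + C b) * z
        = (z * C a - C a * z) * X + (z * C b - C b * z) := by
      rw [mul_add, add_mul, mul_assoc, X_mul]
      noncomm_ring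
    rw [hrw]
    rw [coeff_add]
    apply S.add_mem
    · cases k with
      | zero =>
        rw [coeff_mul_X_zero]
        exact S.zero_mem
      | succ m =>
        rw [coeff_mul_X]
        rw [coeff_sub, coeff_mul_C, coeff_C_mul]
        have h1 : z.coeff m * a - a * z.coeff m = ⁅z.coeff m, a⁆ := (Ring.lie_def _ _).symm
        rw [h1]
        exact S.lie_mem (ih m) ha
    · rw [coeff_sub, coeff_mul_C, coeff_C_mul]
      have h2 : z.coeff k * b - b * z.coeff k = ⁅z.coeff k, b⁆ := (Ring.lie_def _ _).symm
      rw [h2]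
      exact S.lie_mem (ih k) hb

lemma jac_key {A : Type*} [Ring A] (p : ℕ) [hp : Fact p.Prime] [CharP A p] (a b : A) :
    (fun z => z * (C a * X + C b) - (C a * X + C b) * z)^[p - 1] (C a)
      = derivative ((C a * X + C b) ^ p) := by
  have hp2 : 2 ≤ p := hp.out.two_le
  set x : A[X] := C a * X + C b with hx
  rw [jac_ad_iter_eq, show p - 1 + 1 = p by omega, jac_deriv_pow_eq]
  rw [← Finset.sum_range_reflect (fun j => x ^ j * C a * x ^ (p - 1 - j)) p]
  apply Finset.sum_congr rfl
  intro i hi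
  rw [mem_range] at hi
  have h1 : i ≤ p - 1 := by omega
  have h2 : p - 1 - (p - 1 - i) = i := by omega
  rw [h2, zsmul_eq_mul, jac_scalar_one p h1, one_mul]

end JacAux

/-- Jacobson's formula: in an associative ring `A` of prime characteristic `p`, for all
`a b : A` there are elements `s i` (for `1 ≤ i ≤ p-1`) such that `i • s i` is the
coefficient of `t^{i-1}` in `ad(t·a+b)^{p-1}(a)` computed in `A[t]`, each `s i` lies in
the Lie subring generated by `a` and `b`, and
`(a+b)^p = a^p + b^p + Σ_{i=1}^{p-1} s i`. -/
theorem stmt_8 {A : Type*} [Ring A] (p : ℕ) [Fact p.Prime] [CharP A p] (a b : A) :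
    ∃ s : ℕ → A,
      (∀ i ∈ Finset.Icc 1 (p - 1),
        i • s i
            = ((fun z => z * (Polynomial.C a * Polynomial.X + Polynomial.C b)
                - (Polynomial.C a * Polynomial.X + Polynomial.C b) * z)^[p - 1]
              (Polynomial.C a)).coeff (i - 1)
          ∧ s i ∈ LieSubalgebra.lieSpan ℤ A {a, b})
      ∧ (a + b) ^ p = a ^ p + b ^ p + ∑ i ∈ Finset.Icc 1 (p - 1), s i := by
  have hp : Fact p.Prime := inferInstance
  have hp2 : 2 ≤ p := hp.out.two_le
  set x : A[X] := C a * X + C b with hx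
  refine ⟨fun i => (x ^ p).coeff i, ?_, ?_⟩
  · intro i hi
    rw [Finset.mem_Icc] at hi
    have hcoeff : ((fun z => z * x - x * z)^[p - 1] (C a)).coeff (i - 1)
        = i • (x ^ p).coeff i := by
      rw [jac_key p a b, coeff_derivative]
      rw [show i - 1 + 1 = i by omega]
      have hcast : ((i - 1 : ℕ) : A) + 1 = (i : A) := by
        rw [← Nat.cast_add_one, show i - 1 + 1 = i by omega]
      rw [hcast, nsmul_eq_mul, (Nat.cast_commute i ((x ^ p).coeff i)).eq]
    constructor
    · exact hcoeff.symm
    · -- membership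
      set S := LieSubalgebra.lieSpan ℤ A {a, b} with hS
      have hmem : i • (x ^ p).coeff i ∈ S := by
        rw [← hcoeff]
        exact jac_mem_span_coeff a b (p - 1) (i - 1)
      have hnd : ¬ p ∣ i := by
        intro hdvd
        have := Nat.le_of_dvd (by omega) hdvd
        omega
      have hcop : Nat.Coprime i p := (Nat.coprime_comm.mp ((Nat.Prime.coprime_iff_not_dvd hp.out).mpr hnd))
      have hic : IsCoprime (i : ℤ) (p : ℤ) := Nat.isCoprime_iff_coprime.mpr hcop
      rcases hic with ⟨u, v, huv⟩
      have hps : ((p : ℤ)) • (x ^ p).coeff i = 0 := by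
        rw [zsmul_eq_mul]
        push_cast
        rw [CharP.cast_eq_zero A p, zero_mul]
      have : (x ^ p).coeff i = u • (i • (x ^ p).coeff i) := by
        calc (x ^ p).coeff i = ((1 : ℤ)) • (x ^ p).coeff i := (one_smul _ _).symm
        _ = ((u * i + v * p : ℤ)) • (x ^ p).coeff i := by rw [huv]
        _ = (u * (i : ℤ)) • (x ^ p).coeff i + (v * (p : ℤ)) • (x ^ p).coeff i := by
            rw [← add_smul]
        _ = u • ((i : ℤ) • (x ^ p).coeff i) + v • ((p : ℤ) • (x ^ p).coeff i) := by
            rw [mul_smul, mul_smul]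
        _ = u • (i • (x ^ p).coeff i) := by
            rw [hps, smul_zero, add_zero, natCast_zsmul]
      show (x ^ p).coeff i ∈ S
      rw [this]
      exact S.smul_mem u hmem
  · -- the sum formula
    set φ : A[X] →+* A :=
      eval₂RingHom' (RingHom.id A) (1 : A) (fun c => Commute.one_right _) with hφ
    have hC : ∀ c : A, φ (C c) = c := fun c => eval₂_C _ _
    have hX : φ X = 1 := eval₂_X _ _
    have hx1 : φ x = a + b := by
      rw [hx, map_add, map_mul, hC, hC, hX, mul_one]
    have hP : φ (x ^ p) = (a + b) ^ p := by rw [map_pow, hx1]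
    have hdeg : (x ^ p).natDegree < p + 1 := Nat.lt_succ_of_le (jac_natDeg_pow_le a b p)
    have hsum : φ (x ^ p) = ∑ i ∈ Finset.range (p + 1), (x ^ p).coeff i := by
      show eval₂ (RingHom.id A) 1 (x ^ p) = _
      rw [eval₂_eq_sum_range' (RingHom.id A) hdeg 1]
      simp
    have hsplit : ∑ i ∈ Finset.range (p + 1), (x ^ p).coeff i
        = (x ^ p).coeff 0 + ∑ i ∈ Finset.Icc 1 (p - 1), (x ^ p).coeff i + (x ^ p).coeff p := by
      have hI : Finset.Ico 1 p = Finset.Icc 1 (p - 1) := by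
        rw [← Finset.Ico_add_one_right_eq_Icc, show p - 1 + 1 = p by omega]
      rw [Finset.sum_range_succ, Finset.range_eq_Ico,
        Finset.sum_eq_sum_Ico_succ_bot hp.out.pos, hI]
    rw [← hP, hsum, hsplit, jac_coeff_bot, jac_coeff_top]
    abel
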